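/- Let ϑ be C² with ϑ'' > 0, v = ϑ' with inverse u(·), and η convex. For u⁻ ≠ u⁺, with η̄(u⁻,u⁺) = ∫₀¹ η(u(θ v(u⁺)+(1−θ) v(u⁻))) dθ and β(u⁻,u⁺) defined as above, one has η̄(u⁻,u⁺) − η(u⁻) ≤ 2β(u⁻,u⁺)(η(u⁺) − η(u⁻)). -/

import Mathlib

/-- Key inequality: η̄(u⁻,u⁺) − η(u⁻) ≤ 2β(u⁻,u⁺)(η(u⁺) − η(u⁻)). -/
theorem stmt6 (ϑ uinv η : ℝ → ℝ)
    (hϑ : ContDiff ℝ 2 ϑ) (hconv : ∀ x, 0 < deriv (deriv ϑ) x)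
    (hinvL : Function.LeftInverse uinv (deriv ϑ))
    (hinvR : Function.RightInverse uinv (deriv ϑ))
    (hcont : Continuous uinv)
    (hηcvx : ConvexOn ℝ Set.univ η)
    (um up : ℝ) (hne : um ≠ up) :
    (∫ θ in (0:ℝ)..1, η (uinv (θ * deriv ϑ up + (1 - θ) * deriv ϑ um))) - η um ≤
      2 * ((1 / 2) * ∫ θ in (0:ℝ)..1,
          (uinv (θ * deriv ϑ up + (1 - θ) * deriv ϑ um) - um) / (up - um)) *
        (η up - η um) := by
  set v := deriv ϑ with hv
  have hvmono : StrictMono v := strictMono_of_deriv_pos hconv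
  have humono : StrictMono uinv := by
    intro a b hab
    have : v (uinv a) < v (uinv b) := by rw [hinvR a, hinvR b]; exact hab
    exact hvmono.lt_iff_lt.mp this
  set w : ℝ → ℝ := fun θ => uinv (θ * v up + (1 - θ) * v um) with hw
  have hwcont : Continuous w := by
    apply hcont.comp; continuity
  set ς : ℝ → ℝ := fun θ => (w θ - um) / (up - um) with hς
  have hd : up - um ≠ 0 := sub_ne_zero.mpr (Ne.symm hne)
  have hηcont : Continuous η := by
    rw [← continuousOn_univ]
    exact hηcvx.continuousOn isOpen_univ
  -- w θ between um and up for θ ∈ [0,1]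
  have hwmem : ∀ θ ∈ Set.Icc (0:ℝ) 1, ς θ ∈ Set.Icc (0:ℝ) 1 := by
    intro θ ⟨h0, h1⟩
    have h0' : (0:ℝ) ≤ 1 - θ := by linarith
    rcases lt_or_gt_of_ne hne with h | h
    · have hvlt : v um < v up := hvmono h
      have hle1 : v um ≤ θ * v up + (1 - θ) * v um := by nlinarith
      have hle2 : θ * v up + (1 - θ) * v um ≤ v up := by nlinarith
      have l1 : um ≤ w θ := by
        have := humono.monotone hle1; rwa [hinvL um] at this
      have l2 : w θ ≤ up := by
        have := humono.monotone hle2; rwa [hinvL up] at this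
      constructor
      · exact div_nonneg (by linarith) (by linarith)
      · rw [div_le_one (by linarith)]; linarith
    · have hvlt : v up < v um := hvmono h
      have hle1 : v up ≤ θ * v up + (1 - θ) * v um := by nlinarith
      have hle2 : θ * v up + (1 - θ) * v um ≤ v um := by nlinarith
      have l1 : up ≤ w θ := by
        have := humono.monotone hle1; rwa [hinvL up] at this
      have l2 : w θ ≤ um := by
        have := humono.monotone hle2; rwa [hinvL um] at this
      constructor
      · exact div_nonneg_iff.mpr (Or.inr ⟨by linarith, by linarith⟩)
      · rw [div_le_one_of_neg (by linarith)]; linarith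
  -- pointwise convexity bound
  have hpt : ∀ θ ∈ Set.Icc (0:ℝ) 1,
      η (w θ) ≤ η um + ς θ * (η up - η um) := by
    intro θ hθ
    obtain ⟨hς0, hς1⟩ := hwmem θ hθ
    have hwrep : w θ = ς θ * up + (1 - ς θ) * um := by
      have h' : ς θ * (up - um) = w θ - um := div_mul_cancel₀ _ hd
      linear_combination -h'
    have := hηcvx.2 (Set.mem_univ up) (Set.mem_univ um) hς0 (by linarith : (0:ℝ) ≤ 1 - ς θ) (by ring)
    simp only [smul_eq_mul] at this
    rw [hwrep]
    calc η (ς θ * up + (1 - ς θ) * um) ≤ ς θ * η up + (1 - ς θ) * η um := this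
      _ = η um + ς θ * (η up - η um) := by ring
  have hςcont : Continuous ς := (hwcont.sub continuous_const).div_const _
  have hint1 : IntervalIntegrable (fun θ => η (w θ)) MeasureTheory.volume 0 1 :=
    (hηcont.comp hwcont).intervalIntegrable 0 1
  have hint2 : IntervalIntegrable (fun θ => η um + ς θ * (η up - η um)) MeasureTheory.volume 0 1 :=
    (continuous_const.add (hςcont.mul continuous_const)).intervalIntegrable 0 1
  have hmono := intervalIntegral.integral_mono_on (by norm_num : (0:ℝ) ≤ 1) hint1 hint2 hpt
  have hrhs : (∫ θ in (0:ℝ)..1, (η um + ς θ * (η up - η um)))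
      = η um + (∫ θ in (0:ℝ)..1, ς θ) * (η up - η um) := by
    rw [intervalIntegral.integral_add (f := fun _ => η um) (g := fun θ => ς θ * (η up - η um)) (intervalIntegrable_const)
      ((hςcont.mul continuous_const).intervalIntegrable 0 1),
      intervalIntegral.integral_mul_const, intervalIntegral.integral_const]
    simp
  rw [hrhs] at hmono
  have : (∫ θ in (0:ℝ)..1, η (w θ)) - η um ≤ (∫ θ in (0:ℝ)..1, ς θ) * (η up - η um) := by
    linarith
  calc (∫ θ in (0:ℝ)..1, η (uinv (θ * deriv ϑ up + (1 - θ) * deriv ϑ um))) - η um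
      ≤ (∫ θ in (0:ℝ)..1, ς θ) * (η up - η um) := this
    _ = 2 * ((1 / 2) * ∫ θ in (0:ℝ)..1,
          (uinv (θ * deriv ϑ up + (1 - θ) * deriv ϑ um) - um) / (up - um)) *
        (η up - η um) := by ring
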